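/- Let γ be a non-crossing (ε)-contour at σ in Λ(l). Then (1/2)Δ_γ H^ω_{Λ(l)}(σ) ≥ |γ̲| − ε ∑_{y ∈ V_ex(γ̄)} ω_y ≥ |γ̲| − |I(γ)| ≥ 0, where γ̄ = ∂Q(Λ(l)) ∩ ∂Q(Θ̃) and I(γ) = V_ex(γ̄). -/

import Mathlib

open Finset

/-! ### Basic lattice notions for the 2-D Ising model on the square Λ(l) -/

abbrev Site := ℤ × ℤ

/-- `l¹`-distance on `ℤ²`. -/
def d1 (x y : Site) : ℤ := |x.1 - y.1| + |x.2 - y.2|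

/-- `l∞`-distance on `ℤ²`. -/
def dinf (x y : Site) : ℤ := max |x.1 - y.1| |x.2 - y.2|

/-- There is a path from `x` to `y` inside `S` with steps of `d`-distance 1. -/
def ChainIn (d : Site → Site → ℤ) (S : Set Site) (x y : Site) : Prop :=
  ∃ L : List Site, L.Chain' (fun a b => d a b = 1) ∧ L.head? = some x ∧
    L.getLast? = some y ∧ ∀ a ∈ L, a ∈ S

/-- `S` is connected with respect to steps of `d`-distance 1. -/
def ConnIn (d : Site → Site → ℤ) (S : Set Site) : Prop :=
  ∀ x ∈ S, ∀ y ∈ S, ChainIn d S x y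

def lamLo (l : ℕ) : ℤ := 1 - (((l + 1) / 2 : ℕ) : ℤ)
def lamHi (l : ℕ) : ℤ := ((l / 2 : ℕ) : ℤ)

/-- The lamBox the box. -/
noncomputable def lamBox (l : ℕ) : Finset Site := Finset.Icc (lamLo l, lamLo l) (lamHi l, lamHi l)

/-- The exterior boundary `∂_ex Λ(l)`. -/
def extBdry (l : ℕ) : Set Site := {y | y ∉ lamBox l ∧ ∃ x ∈ lamBox l, d1 x y = 1}

/-- An interval of `∂_ex Λ(l)` : an `l∞`-connected subset of it. -/
def IsBdryInterval (l : ℕ) (I : Finset Site) : Prop :=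
  (↑I : Set Site) ⊆ extBdry l ∧ ConnIn dinf ↑I

/-- The four nearest neighbours of a site. -/
def nbrs (x : Site) : Finset Site :=
  {(x.1 + 1, x.2), (x.1 - 1, x.2), (x.1, x.2 + 1), (x.1, x.2 - 1)}

/-- A dual bond, recorded by its two endpoints `v`, a dual vertex `v` standing for the
point `v + (1/2, 1/2)` of the dual lattice. -/
abbrev DBond := Sym2 Site

/-- The dual bond of the nearest-neighbour bond `{x, y}`. -/
def dualBond (x y : Site) : DBond :=
  if x.2 = y.2 then s((min x.1 y.1, x.2 - 1), (min x.1 y.1, x.2))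
  else s((x.1 - 1, min x.2 y.2), (x.1, min x.2 y.2))

/-- `∂Q(Θ)` : the set of dual bonds separating `Θ` from its complement. -/
def contourOf (Θ : Finset Site) : Finset DBond :=
  Θ.biUnion fun x => ((nbrs x).filter (· ∉ Θ)).image fun y => dualBond x y

/-- `Θ` and its complement are `l¹`-connected, so that `∂Q(Θ)` is a contour. -/
def IsContourRegion (Θ : Finset Site) : Prop :=
  ConnIn d1 ↑Θ ∧ ConnIn d1 ((↑Θ : Set Site)ᶜ)

/-- `∂Q(Λ(l))`, as a set of dual bonds. -/
noncomputable def boxBdry (l : ℕ) : Finset DBond := contourOf (lamBox l)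

/-- The dual vertex `v` lies on the side `F_l^j` of `Q(Λ(l))` (`j ∈ {1,-1,2,-2}` for
right, left, top, bottom). -/
def onSide (l : ℕ) (j : ℤ) (v : Site) : Prop :=
  (j = 1 ∧ v.1 = lamHi l ∧ lamLo l - 1 ≤ v.2 ∧ v.2 ≤ lamHi l) ∨
  (j = -1 ∧ v.1 = lamLo l - 1 ∧ lamLo l - 1 ≤ v.2 ∧ v.2 ≤ lamHi l) ∨
  (j = 2 ∧ v.2 = lamHi l ∧ lamLo l - 1 ≤ v.1 ∧ v.1 ≤ lamHi l) ∨
  (j = -2 ∧ v.2 = lamLo l - 1 ∧ lamLo l - 1 ≤ v.1 ∧ v.1 ≤ lamHi l)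

/-- The set of dual bonds `γ` meets the side `F_l^j`. -/
def touches (l : ℕ) (j : ℤ) (γ : Finset DBond) : Prop :=
  ∃ e ∈ γ, ∃ v : Site, v ∈ e ∧ onSide l j v

def HorizCrossing (l : ℕ) (γ : Finset DBond) : Prop := touches l 1 γ ∧ touches l (-1) γ
def VertCrossing (l : ℕ) (γ : Finset DBond) : Prop := touches l 2 γ ∧ touches l (-2) γ

/-- `γ` is neither horizontally nor vertically crossing. -/
def NonCrossing (l : ℕ) (γ : Finset DBond) : Prop :=
  ¬ (HorizCrossing l γ ∨ VertCrossing l γ)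

/-- Two dual bonds are adjacent if they share a dual vertex. -/
def DAdj (a b : DBond) : Prop := ∃ v : Site, v ∈ a ∧ v ∈ b

/-- A set of dual bonds is connected (via shared dual vertices). -/
def DConn (S : Finset DBond) : Prop :=
  ∀ e ∈ S, ∀ f ∈ S, ∃ L : List DBond, L.Chain' DAdj ∧ L.head? = some e ∧
    L.getLast? = some f ∧ ∀ a ∈ L, a ∈ S

/-- Dual bonds separating `Θt` from `Λ(l) \ Θt` inside the lamBox. -/
noncomputable def interiorBdry (l : ℕ) (Θt : Finset Site) : Finset DBond :=
  Θt.biUnion fun x => ((nbrs x).filter fun y => y ∈ lamBox l ∧ y ∉ Θt).image fun y => dualBond x y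

/-- The sites of `Λ(l)` along the side `F_l^j`. -/
def sideSites (l : ℕ) (j : ℤ) (x : Site) : Prop :=
  x ∈ lamBox l ∧ ((j = 1 ∧ x.1 = lamHi l) ∨ (j = -1 ∧ x.1 = lamLo l) ∨
    (j = 2 ∧ x.2 = lamHi l) ∨ (j = -2 ∧ x.2 = lamLo l))

/-- The data of the distinguished connected component `γ̲ = γu` of `γ \ ∂Q(Λ(l))` and of the
region `Θ̃ = Θt` into which a non-crossing contour `γ = ∂Q(Θ)` divides the lamBox: `γu` is a
connected component of `γ \ ∂Q(Λ(l))` dividing `Λ(l)` into the `l¹`-connected pieces `Θt` and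
`Λ(l) \ Θt`, with `Θ ⊆ Θt` and `F_l^i ∪ F_l^j ⊆ ∂Q(Λ(l) \ Θt)` for untouched sides `i, j`. -/
def UnderlineData (l : ℕ) (Θ : Finset Site) (γu : Finset DBond) (Θt : Finset Site) : Prop :=
  γu ⊆ contourOf Θ \ boxBdry l ∧ DConn γu ∧
  (∀ e ∈ contourOf Θ \ boxBdry l, e ∉ γu → ∀ f ∈ γu, ¬ DAdj e f) ∧
  Θ ⊆ Θt ∧ Θt ⊆ lamBox l ∧ ConnIn d1 ↑Θt ∧ ConnIn d1 ↑(lamBox l \ Θt) ∧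
  interiorBdry l Θt = γu ∧
  ∃ i j : ℤ, (i = 1 ∨ i = -1) ∧ (j = 2 ∨ j = -2) ∧
    ¬ touches l i (contourOf Θ) ∧ ¬ touches l j (contourOf Θ) ∧
    (∀ x, sideSites l i x → x ∉ Θt) ∧ (∀ x, sideSites l j x → x ∉ Θt)

/-- `γ̄ = ∂Q(Λ(l)) ∩ ∂Q(Θ̃)`. -/
noncomputable def gammaBar (l : ℕ) (Θt : Finset Site) : Finset DBond := boxBdry l ∩ contourOf Θt

/-- `V_ex(γ)` : sites of the exterior boundary attached to dual bonds of `γ`. -/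
noncomputable def Vex (l : ℕ) (γ : Finset DBond) : Finset Site :=
  (lamBox l).biUnion fun x => (nbrs x).filter fun y => y ∉ lamBox l ∧ dualBond x y ∈ γ

/-- `T_Θ` : flip the spins in `Θ`. -/
def flipC (Θ : Finset Site) (σ : Site → ℤ) : Site → ℤ :=
  fun x => if x ∈ Θ then -σ x else σ x

/-- The Ising Hamiltonian `H^ω_{Λ(l)}(σ)` with boundary condition `ω`. -/
noncomputable def Ham (l : ℕ) (ω : Site → ℝ) (σ : Site → ℤ) : ℝ :=
  -(1/2) * ∑ x ∈ lamBox l, ∑ y ∈ (nbrs x).filter (· ∈ lamBox l), ((σ x * σ y : ℤ) : ℝ)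
    - ∑ x ∈ lamBox l, ∑ y ∈ (nbrs x).filter (· ∉ lamBox l), (σ x : ℝ) * ω y

/-- `Δ_{γ₁,…,γ_p} H^ω_{Λ(l)}(σ) = H(σ) - H(T_{γ₁}∘⋯∘T_{γ_p} σ)`, the contours being
recorded by their regions `Θ(γ_j)`. -/
noncomputable def dH (l : ℕ) (ω : Site → ℝ) (Θs : List (Finset Site)) (σ : Site → ℤ) : ℝ :=
  Ham l ω σ - Ham l ω (Θs.foldr flipC σ)

/-- `C` is an (ε)-cluster in `Λ(l)` at `σ` : a maximal `l¹`-connected component of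
`{x ∈ Λ(l) : σ_x = ε}`. -/
def IsCluster (l : ℕ) (σ : Site → ℤ) (ε : ℤ) (C : Finset Site) : Prop :=
  C.Nonempty ∧ (∀ x ∈ C, x ∈ lamBox l ∧ σ x = ε) ∧ ConnIn d1 ↑C ∧
  ∀ y ∈ lamBox l, σ y = ε → (∃ x ∈ C, d1 x y = 1) → y ∈ C

/-- The `l¹`-connected component of `x` within `S`. -/
def l1Comp (S : Set Site) (x : Site) : Set Site := {y | ChainIn d1 S x y}

/-- `C` together with the bounded components of its complement; `∂Q(fill C)` is the outer
boundary of `Q(C)`. -/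
def fill (C : Finset Site) : Set Site :=
  ↑C ∪ {x | (l1Comp ((↑C : Set Site)ᶜ) x).Finite}

/-- `Θ` is the region `Θ(γ)` of an (ε)-contour `γ` in `Λ(l)` at `σ`. -/
def IsEContour (l : ℕ) (σ : Site → ℤ) (ε : ℤ) (Θ : Finset Site) : Prop :=
  ∃ C : Finset Site, IsCluster l σ ε C ∧ (↑Θ : Set Site) = fill C

/-- A dual bond is horizontal. -/
def isHorizD (e : DBond) : Prop := ∃ v w : Site, e = s(v, w) ∧ v.2 = w.2

/-- A dual bond is vertical. -/
def isVertD (e : DBond) : Prop := ∃ v w : Site, e = s(v, w) ∧ v.1 = w.1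

open Classical in
/-- The number of horizontal dual bonds in `γ`. -/
noncomputable def horizCount (γ : Finset DBond) : ℕ := (γ.filter isHorizD).card

open Classical in
/-- The number of vertical dual bonds in `γ`. -/
noncomputable def vertCount (γ : Finset DBond) : ℕ := (γ.filter isVertD).card

/-! ### Glauber dynamics -/

/-- Configurations on a finite `Λ ⊂ ℤ²` (`true` = spin `+1`, `false` = spin `-1`). -/
abbrev Cfg (Λ : Finset Site) := ↥Λ → Bool

/-- The spin value of a Boolean. -/
def spinVal (b : Bool) : ℝ := if b then 1 else -1

/-- The Ising Hamiltonian on a general finite `Λ`. -/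
noncomputable def HamG (Λ : Finset Site) (ω : Site → ℝ) (σ : Cfg Λ) : ℝ :=
  -(1/2) * ∑ x : ↥Λ, ∑ y : ↥Λ, (if d1 ↑x ↑y = 1 then spinVal (σ x) * spinVal (σ y) else 0)
    - ∑ x : ↥Λ, ∑ y ∈ (nbrs ↑x).filter (· ∉ Λ), spinVal (σ x) * ω y

/-- The finite-volume Gibbs measure `μ^ω_Λ` at inverse temperature `β`. -/
noncomputable def gibbs (Λ : Finset Site) (ω : Site → ℝ) (β : ℝ) (σ : Cfg Λ) : ℝ :=
  Real.exp (-β * HamG Λ ω σ) / ∑ τ : Cfg Λ, Real.exp (-β * HamG Λ ω τ)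

/-- The mean of `f` under the weights `μ`. -/
noncomputable def meanW (Λ : Finset Site) (μ f : Cfg Λ → ℝ) : ℝ := ∑ σ : Cfg Λ, μ σ * f σ

/-- `σ^x` : flip the spin at `x`. -/
def flipAt (Λ : Finset Site) (σ : Cfg Λ) (x : ↥Λ) : Cfg Λ := Function.update σ x (!(σ x))

/-- The generator `A^ω_Λ` of the stochastic Ising model with flip rates `q`. -/
noncomputable def genA (Λ : Finset Site) (q : ↥Λ → Cfg Λ → ℝ) (f : Cfg Λ → ℝ) (σ : Cfg Λ) : ℝ :=
  ∑ x : ↥Λ, q x σ * (f (flipAt Λ σ x) - f σ)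

/-- The variance `μ(|f - μf|²)`. -/
noncomputable def varW (Λ : Finset Site) (μ f : Cfg Λ → ℝ) : ℝ :=
  meanW Λ μ (fun σ => |f σ - meanW Λ μ f| ^ 2)

/-- The spectral gap `gap(Λ, ω, β)` : the infimum of the Rayleigh quotients
`-μ(f A f) / μ(|f - μf|²)`. -/
noncomputable def specGap (Λ : Finset Site) (ω : Site → ℝ) (β : ℝ)
    (q : ↥Λ → Cfg Λ → ℝ) : ℝ :=
  sInf { r | ∃ f : Cfg Λ → ℝ, varW Λ (gibbs Λ ω β) f ≠ 0 ∧
    r = (- meanW Λ (gibbs Λ ω β) fun σ => f σ * genA Λ q f σ) / varW Λ (gibbs Λ ω β) f }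

/-- The `±1`-spin function of a configuration on `Λ(l)` (`0` outside the lamBox). -/
noncomputable def toSpin (l : ℕ) (σ : Cfg (lamBox l)) : Site → ℤ :=
  fun x => if h : x ∈ lamBox l then (if σ ⟨x, h⟩ then 1 else -1) else 0

/-- The magnetization at the origin, `μ^ω_{Λ(l)}(σ₀)`. -/
noncomputable def magZero (l : ℕ) (ω : Site → ℝ) (β : ℝ) : ℝ :=
  ∑ σ : Cfg (lamBox l), gibbs (lamBox l) ω β σ * ((toSpin l σ (0, 0) : ℤ) : ℝ)

/-- The favoured sign `ε_{l,ω}`. -/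
noncomputable def epsSign (l : ℕ) (ω : Site → ℝ) (β : ℝ) : ℤ :=
  if 0 ≤ magZero l ω β then 1 else -1

/-- The trap event `Γ_l` : some (ε)-contour `γ` at `σ` meets `∂Q(Λ(l))` and has
`|γ| ≥ 2δ₁ l`. -/
def GammaEvent (l : ℕ) (δ₁ : ℝ) (ε : ℤ) : Set (Cfg (lamBox l)) :=
  {σ | ∃ Θ : Finset Site, IsEContour l (toSpin l σ) ε Θ ∧
    (contourOf Θ ∩ boxBdry l).Nonempty ∧ 2 * δ₁ * l ≤ ((contourOf Θ).card : ℝ)}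

open Classical in
/-- The Gibbs probability of an event `S ⊂ Ω_{Λ(l)}`. -/
noncomputable def probOf (l : ℕ) (ω : Site → ℝ) (β : ℝ) (S : Set (Cfg (lamBox l))) : ℝ :=
  ∑ σ ∈ Finset.univ.filter (· ∈ S), gibbs (lamBox l) ω β σ

/-- Union of the contours of a list of regions. -/
def unionB (L : List (Finset Site)) : Finset DBond :=
  L.foldr (fun Θ s => contourOf Θ ∪ s) ∅

/-- Union of a list of regions. -/
def unionR (L : List (Finset Site)) : Finset Site :=
  L.foldr (· ∪ ·) ∅

/-! ### Auxiliary lemmas for stmt5 -/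

section Aux

lemma mem_nbrs_iff {x y : Site} :
    y ∈ nbrs x ↔ y = (x.1 + 1, x.2) ∨ y = (x.1 - 1, x.2) ∨
      y = (x.1, x.2 + 1) ∨ y = (x.1, x.2 - 1) := by
  simp [nbrs]

lemma nbrs_symm {x y : Site} (h : y ∈ nbrs x) : x ∈ nbrs y := by
  rcases mem_nbrs_iff.1 h with h | h | h | h <;> subst h <;>
    simp [mem_nbrs_iff, Prod.ext_iff] <;> omega

lemma d1_of_nbrs {x y : Site} (h : y ∈ nbrs x) : d1 x y = 1 := by
  rcases mem_nbrs_iff.1 h with h | h | h | h <;> subst h <;>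
    simp [d1] <;> omega

lemma mem_lamBox {l : ℕ} {x : Site} :
    x ∈ lamBox l ↔ lamLo l ≤ x.1 ∧ x.1 ≤ lamHi l ∧ lamLo l ≤ x.2 ∧ x.2 ≤ lamHi l := by
  cases x; simp [lamBox, Finset.mem_Icc, Prod.le_def]; tauto

lemma dualBond_right (a b : ℤ) : dualBond (a, b) (a + 1, b) = s((a, b - 1), (a, b)) := by
  simp only [dualBond, if_pos rfl]; norm_num

lemma dualBond_left (a b : ℤ) : dualBond (a, b) (a - 1, b) = s((a - 1, b - 1), (a - 1, b)) := by
  simp only [dualBond, if_pos rfl]; norm_num [min_def]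

lemma dualBond_up (a b : ℤ) : dualBond (a, b) (a, b + 1) = s((a - 1, b), (a, b)) := by
  have : b ≠ b + 1 := by omega
  simp only [dualBond]; rw [if_neg this]; norm_num

lemma dualBond_down (a b : ℤ) : dualBond (a, b) (a, b - 1) = s((a - 1, b - 1), (a, b - 1)) := by
  have : b ≠ b - 1 := by omega
  simp only [dualBond]; rw [if_neg this]; norm_num [min_def]

lemma dualBond_inj {x y x' y' : Site} (h : y ∈ nbrs x) (h' : y' ∈ nbrs x')
    (he : dualBond x y = dualBond x' y') :
    (x = x' ∧ y = y') ∨ (x = y' ∧ y = x') := by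
  obtain ⟨a, b⟩ := x; obtain ⟨c, d⟩ := x'
  rcases mem_nbrs_iff.1 h with rfl | rfl | rfl | rfl <;>
    rcases mem_nbrs_iff.1 h' with rfl | rfl | rfl | rfl <;>
    simp only [dualBond_right, dualBond_left, dualBond_up, dualBond_down,
      Sym2.eq_iff, Prod.mk.injEq] at he <;>
    simp only [Prod.mk.injEq] <;> omega

lemma mem_contourOf {Θ : Finset Site} {e : DBond} :
    e ∈ contourOf Θ ↔ ∃ x ∈ Θ, ∃ y ∈ nbrs x, y ∉ Θ ∧ e = dualBond x y := by
  simp only [contourOf, Finset.mem_biUnion, Finset.mem_image, Finset.mem_filter]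
  constructor
  · rintro ⟨x, hx, y, ⟨hy, hyΘ⟩, rfl⟩; exact ⟨x, hx, y, hy, hyΘ, rfl⟩
  · rintro ⟨x, hx, y, hy, hyΘ, rfl⟩; exact ⟨x, hx, y, ⟨hy, hyΘ⟩, rfl⟩

lemma mem_interiorBdry {l : ℕ} {Θt : Finset Site} {e : DBond} :
    e ∈ interiorBdry l Θt ↔
      ∃ x ∈ Θt, ∃ y ∈ nbrs x, y ∈ lamBox l ∧ y ∉ Θt ∧ e = dualBond x y := by
  simp only [interiorBdry, Finset.mem_biUnion, Finset.mem_image, Finset.mem_filter]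
  constructor
  · rintro ⟨x, hx, y, ⟨hy, h1, h2⟩, rfl⟩; exact ⟨x, hx, y, hy, h1, h2, rfl⟩
  · rintro ⟨x, hx, y, hy, h1, h2, rfl⟩; exact ⟨x, hx, y, ⟨hy, h1, h2⟩, rfl⟩

/-- From membership of a dual bond of a neighbour pair in a contour, deduce crossing. -/
lemma cross_of_mem_contourOf {Θ : Finset Site} {x y : Site} (hy : y ∈ nbrs x)
    (he : dualBond x y ∈ contourOf Θ) : (x ∈ Θ ∧ y ∉ Θ) ∨ (y ∈ Θ ∧ x ∉ Θ) := by
  obtain ⟨x', hx', y', hy', hy'Θ, he'⟩ := mem_contourOf.1 he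
  rcases dualBond_inj hy hy' he' with ⟨rfl, rfl⟩ | ⟨rfl, rfl⟩
  · exact Or.inl ⟨hx', hy'Θ⟩
  · exact Or.inr ⟨hx', hy'Θ⟩

lemma cross_of_mem_interiorBdry {l : ℕ} {Θt : Finset Site} {x y : Site} (hy : y ∈ nbrs x)
    (he : dualBond x y ∈ interiorBdry l Θt) :
    (x ∈ Θt ∧ y ∈ lamBox l ∧ y ∉ Θt) ∨ (y ∈ Θt ∧ x ∈ lamBox l ∧ x ∉ Θt) := by
  obtain ⟨x', hx', y', hy', h1, h2, he'⟩ := mem_interiorBdry.1 he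
  rcases dualBond_inj hy hy' he' with ⟨rfl, rfl⟩ | ⟨rfl, rfl⟩
  · exact Or.inl ⟨hx', h1, h2⟩
  · exact Or.inr ⟨hx', h1, h2⟩

lemma mem_boxBdry_of {l : ℕ} {x y : Site} (hx : x ∈ lamBox l) (hy : y ∈ nbrs x)
    (hyl : y ∉ lamBox l) : dualBond x y ∈ boxBdry l :=
  mem_contourOf.2 ⟨x, hx, y, hy, hyl, rfl⟩

lemma not_mem_boxBdry {l : ℕ} {x y : Site} (hy : y ∈ nbrs x) (hx : x ∈ lamBox l)
    (hyl : y ∈ lamBox l) : dualBond x y ∉ boxBdry l := by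
  intro h
  rcases cross_of_mem_contourOf hy h with ⟨_, h2⟩ | ⟨_, h2⟩
  exacts [h2 hyl, h2 hx]

/-- An exterior site has a unique neighbour inside the box. -/
lemma ext_nbr_unique {l : ℕ} {x x' y : Site} (hy : y ∉ lamBox l) (hx : x ∈ lamBox l)
    (hx' : x' ∈ lamBox l) (h : y ∈ nbrs x) (h' : y ∈ nbrs x') : x = x' := by
  obtain ⟨a, b⟩ := x; obtain ⟨c, d⟩ := x'
  have h1 := mem_lamBox.1 hx
  have h2 := mem_lamBox.1 hx'
  have h3 : ¬ (lamLo l ≤ y.1 ∧ y.1 ≤ lamHi l ∧ lamLo l ≤ y.2 ∧ y.2 ≤ lamHi l) :=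
    fun hh => hy (mem_lamBox.2 hh)
  rcases mem_nbrs_iff.1 h with rfl | rfl | rfl | rfl <;>
    rcases mem_nbrs_iff.1 h' with hh | hh | hh | hh <;>
    simp only [Prod.mk.injEq] at hh ⊢ <;> simp_all <;> omega

end Aux
section Chains

lemma chainIn_trans {d : Site → Site → ℤ} {S : Set Site} {x y z : Site}
    (h1 : ChainIn d S x y) (h2 : ChainIn d S y z) : ChainIn d S x z := by
  obtain ⟨L1, c1, hh1, hl1, hm1⟩ := h1
  obtain ⟨L2, c2, hh2, hl2, hm2⟩ := h2
  match L2, hh2, hl2, c2, hm2 with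
  | b :: t, hh2, hl2, c2, hm2 =>
  have hb : b = y := by simpa using hh2
  match t, hl2, c2, hm2 with
  | [], hl2, c2, hm2 =>
    have hzy : z = y := by
      have : b = z := by simpa using hl2
      rw [← this, hb]
    exact hzy ▸ ⟨L1, c1, hh1, hl1, hm1⟩
  | c :: t', hl2, c2, hm2 =>
    refine ⟨L1 ++ (c :: t'), ?_, ?_, ?_, ?_⟩
    · refine List.IsChain.append c1 (List.IsChain.tail c2) ?_
      intro a ha b' hb'
      have ha' : y = a := by rw [hl1] at ha; simpa using ha
      have hb'' : c = b' := by simpa using hb'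
      rw [← ha', ← hb'', ← hb]
      exact (List.isChain_cons_cons.1 c2).1
    · match L1, hh1 with
      | a :: t'', hh1 => simpa using hh1
    · have hct : (c :: t').getLast? = some z := by
        rw [← hl2]; simp [List.getLast?_cons_cons]
      rw [List.getLast?_append, hct]; rfl
    · intro a ha
      rcases List.mem_append.1 ha with h | h
      · exact hm1 a h
      · exact hm2 a (by simp [h])

lemma d1_symm (a b : Site) : d1 a b = d1 b a := by
  simp [d1, abs_sub_comm]

lemma chainIn_symm {S : Set Site} {x y : Site} (h : ChainIn d1 S x y) :
    ChainIn d1 S y x := by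
  obtain ⟨L, c, hh, hl, hm⟩ := h
  refine ⟨L.reverse, ?_, by simpa using hl, by simpa using hh, by simpa using hm⟩
  exact List.isChain_reverse.2 (List.IsChain.imp (fun a b hab => by rw [d1_symm]; exact hab) c)

lemma chainIn_single {d : Site → Site → ℤ} {S : Set Site} {x : Site} (hx : x ∈ S) :
    ChainIn d S x x := ⟨[x], List.isChain_singleton x, rfl, rfl, by simpa using hx⟩

lemma chainIn_step {S : Set Site} {x y : Site} (hx : x ∈ S) (hy : y ∈ S)
    (hxy : y ∈ nbrs x) : ChainIn d1 S x y := by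
  refine ⟨[x, y], List.isChain_pair.2 (d1_of_nbrs hxy), rfl, rfl, ?_⟩
  intro a ha
  simp only [List.mem_cons, List.not_mem_nil, or_false] at ha
  rcases ha with rfl | rfl
  exacts [hx, hy]

/-- A site of `Θ = fill C` adjacent to the complement of `Θ` belongs to `C`. -/
lemma bdry_mem_cluster {C Θ : Finset Site} (hfill : (↑Θ : Set Site) = fill C)
    {x y : Site} (hx : x ∈ Θ) (hy : y ∈ nbrs x) (hyΘ : y ∉ Θ) : x ∈ C := by
  by_contra hxC
  have hCsub : (C : Set Site) ⊆ (Θ : Set Site) := by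
    rw [hfill]; exact Set.subset_union_left
  have hyC : (y : Site) ∉ (C : Set Site) := fun h => hyΘ (by exact_mod_cast hCsub h)
  have hxmem : (x : Site) ∈ fill C := hfill ▸ (by exact_mod_cast hx)
  have hxf : (l1Comp ((↑C : Set Site)ᶜ) x).Finite := by
    rcases hxmem with h | h
    · exact absurd (by exact_mod_cast h) hxC
    · exact h
  have hynf : ¬ (l1Comp ((↑C : Set Site)ᶜ) y).Finite := by
    intro hfin
    exact hyΘ (by
      have : (y : Site) ∈ fill C := Or.inr hfin
      rw [← hfill] at this; exact_mod_cast this)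
  have hxy : ChainIn d1 ((↑C : Set Site)ᶜ) x y := chainIn_step hxC hyC hy
  refine hynf (hxf.subset ?_)
  intro z hz
  exact chainIn_trans hxy hz

/-- On the boundary of `Θ`, the spin is `ε`; just outside (within the box) it is not `ε`. -/
lemma spin_bdry {l : ℕ} {σ : Site → ℤ} {ε : ℤ} {C Θ : Finset Site}
    (hcl : IsCluster l σ ε C) (hfill : (↑Θ : Set Site) = fill C)
    {x y : Site} (hx : x ∈ Θ) (hy : y ∈ nbrs x) (hyΘ : y ∉ Θ) :
    σ x = ε ∧ (y ∈ lamBox l → σ y ≠ ε) := by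
  have hxC : x ∈ C := bdry_mem_cluster hfill hx hy hyΘ
  obtain ⟨-, hmem, -, hmax⟩ := hcl
  refine ⟨(hmem x hxC).2, fun hyl hyε => ?_⟩
  have : y ∈ C := hmax y hyl hyε ⟨x, hxC, d1_of_nbrs hy⟩
  have hCsub : (C : Set Site) ⊆ (Θ : Set Site) := by
    rw [hfill]; exact Set.subset_union_left
  exact hyΘ (by exact_mod_cast hCsub (by exact_mod_cast this))

end Chains
section Scan

open Classical in
lemma exists_last_not (P : ℤ → Prop) {a b : ℤ} (hab : a ≤ b)
    (ha : ¬ P a) (hb : P b) :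
    ∃ k, a ≤ k ∧ k < b ∧ ¬ P k ∧ ∀ c, k < c → c ≤ b → P c := by
  classical
  set S := (Finset.Icc a b).filter (fun c => ¬ P c) with hS
  have hne : S.Nonempty := ⟨a, by simp [hS, Finset.mem_Icc, hab, ha]⟩
  set k := S.max' hne with hk
  have hkS : k ∈ S := S.max'_mem hne
  rw [hS, Finset.mem_filter, Finset.mem_Icc] at hkS
  have hkb : k ≠ b := fun h => hkS.2 (h ▸ hb)
  refine ⟨k, hkS.1.1, lt_of_le_of_ne hkS.1.2 hkb, hkS.2, ?_⟩
  intro c hc1 hc2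
  by_contra hPc
  have hcS : c ∈ S := by
    rw [hS, Finset.mem_filter, Finset.mem_Icc]
    exact ⟨⟨le_trans hkS.1.1 (le_of_lt hc1), hc2⟩, hPc⟩
  have := S.le_max' c hcS
  omega

lemma exists_first_not (P : ℤ → Prop) {a b : ℤ} (hab : a ≤ b)
    (ha : P a) (hb : ¬ P b) :
    ∃ k, a < k ∧ k ≤ b ∧ ¬ P k ∧ ∀ c, a ≤ c → c < k → P c := by
  obtain ⟨k, h1, h2, h3, h4⟩ :=
    exists_last_not (fun c => P (a + b - c)) hab (by simpa) (by simpa)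
  refine ⟨a + b - k, by omega, by omega, h3, ?_⟩
  intro c hc1 hc2
  have := h4 (a + b - c) (by omega) (by omega)
  simpa using this

def RowB (t : ℤ) (e : DBond) : Prop := ∃ k, e = s((k, t - 1), (k, t))
def ColB (c : ℤ) (e : DBond) : Prop := ∃ k, e = s((c - 1, k), (c, k))

def GoodB (wH wV : ℤ) (y : Site) (e : DBond) : Prop :=
  (y.1 = wH ∧ RowB y.2 e) ∨ (y.2 = wV ∧ ColB y.1 e)

lemma goodB_inj {wH wV : ℤ} {y y' : Site} {e : DBond}
    (h : GoodB wH wV y e) (h' : GoodB wH wV y' e) : y = y' := by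
  obtain ⟨y1, y2⟩ := y; obtain ⟨y1', y2'⟩ := y'
  rcases h with ⟨h1, k, rfl⟩ | ⟨h1, k, rfl⟩ <;>
    rcases h' with ⟨h1', k', he⟩ | ⟨h1', k', he⟩ <;>
    simp only [Sym2.eq_iff, Prod.mk.injEq] at he h1 h1' ⊢ <;> omega

open Classical in
lemma card_le_of_goodB {A : Finset Site} {B : Finset DBond} {wH wV : ℤ}
    (h : ∀ y ∈ A, ∃ e ∈ B, GoodB wH wV y e) : A.card ≤ B.card := by
  classical
  have : ∀ y : Site, y ∈ A → ∃ e : DBond, e ∈ B ∧ GoodB wH wV y e := by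
    intro y hy; obtain ⟨e, he, hg⟩ := h y hy; exact ⟨e, he, hg⟩
  refine Finset.card_le_card_of_injOn
    (fun y => if hy : ∃ e : DBond, e ∈ B ∧ GoodB wH wV y e then hy.choose else s((0,0),(0,0)))
    ?_ ?_
  · intro y hy
    have hex := this y hy
    simp only [dif_pos hex]
    exact hex.choose_spec.1
  · intro y hy y' hy' hee
    have hex := this y hy
    have hex' := this y' hy'
    simp only [dif_pos hex, dif_pos hex'] at hee
    exact goodB_inj hex.choose_spec.2 (hee ▸ hex'.choose_spec.2)

end Scan
section ScanMain

/-- Scanning a lattice line from outside `Θt` to a point of `Θt`: one finds a bond of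
`γu`, and (if the endpoint is outside `Θ`) also a bond of `∂Q(Θ)` that is neither in
`∂Q(Λ(l))` nor in `γu`. -/
lemma scan_main {l : ℕ} {Θ Θt : Finset Site} {γu : Finset DBond}
    (hib : interiorBdry l Θt = γu) (hγsub : γu ⊆ contourOf Θ \ boxBdry l)
    (hΘΘt : Θ ⊆ Θt)
    (φ : ℤ → Site) (hadj : ∀ c, φ (c + 1) ∈ nbrs (φ c))
    {a b : ℤ} (hab : a ≤ b) (hbox : ∀ c, a ≤ c → c ≤ b → φ c ∈ lamBox l)
    (ha : φ a ∉ Θt) (hb : φ b ∈ Θt) :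
    (∃ c, a ≤ c ∧ c < b ∧ dualBond (φ (c + 1)) (φ c) ∈ γu) ∧
      (φ b ∉ Θ → ∃ c, a ≤ c ∧ c < b ∧
        dualBond (φ c) (φ (c + 1)) ∈ (contourOf Θ \ boxBdry l) \ γu) := by
  have hab' : a < b := by
    rcases lt_or_eq_of_le hab with h | h
    · exact h
    · exact absurd (h ▸ hb) ha
  obtain ⟨k, hk1, hk2, hk3, hk4⟩ := exists_last_not (fun c => φ c ∈ Θt) hab ha hb
  have hk5 : φ (k + 1) ∈ Θt := hk4 (k + 1) (by omega) (by omega)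
  have hkbond : dualBond (φ (k + 1)) (φ k) ∈ γu := by
    rw [← hib]
    refine mem_interiorBdry.2 ⟨φ (k + 1), hk5, φ k, nbrs_symm (hadj k), ?_, hk3, rfl⟩
    exact hbox k hk1 (by omega)
  refine ⟨⟨k, hk1, hk2, hkbond⟩, ?_⟩
  intro hbΘ
  -- the `Θt`-side endpoint of the `γu`-bond lies in `Θ`
  have hk6 : φ (k + 1) ∈ Θ := by
    have hcontour : dualBond (φ (k + 1)) (φ k) ∈ contourOf Θ :=
      (Finset.mem_sdiff.1 (hγsub hkbond)).1
    rcases cross_of_mem_contourOf (nbrs_symm (hadj k)) hcontour with ⟨h1, _⟩ | ⟨h1, _⟩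
    · exact h1
    · exact absurd (hΘΘt h1) hk3
  -- scan for the last point of `Θ` in `(k, b]`
  have hkb1 : k + 1 ≤ b := by omega
  obtain ⟨m, hm1, hm2, hm3, hm4⟩ :=
    exists_first_not (fun c => φ c ∈ Θ) hkb1 hk6 hbΘ
  refine ⟨m - 1, by omega, by omega, ?_⟩
  have hmΘ : φ (m - 1) ∈ Θ := hm4 (m - 1) (by omega) (by omega)
  have hm' : φ (m - 1 + 1) = φ m := by norm_num
  rw [Finset.mem_sdiff, Finset.mem_sdiff, hm']
  have hmnbrs : φ m ∈ nbrs (φ (m - 1)) := by rw [← hm']; exact hadj (m - 1)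
  have hmbox : φ m ∈ lamBox l := hbox m (by omega) (by omega)
  have hm1box : φ (m - 1) ∈ lamBox l := hbox (m - 1) (by omega) (by omega)
  have hmΘt : φ m ∈ Θt := hk4 m (by omega) (by omega)
  refine ⟨⟨mem_contourOf.2 ⟨φ (m - 1), hmΘ, φ m, hmnbrs, hm3, rfl⟩, ?_⟩, ?_⟩
  · exact not_mem_boxBdry hmnbrs hm1box hmbox
  · intro hgu
    rw [← hib] at hgu
    rcases cross_of_mem_interiorBdry hmnbrs hgu with ⟨_, _, h2⟩ | ⟨_, _, h2⟩
    · exact h2 hmΘt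
    · exact h2 (hΘΘt hmΘ)

end ScanMain
section VexGood

lemma dualBond_hBA (c t : ℤ) : dualBond (c + 1, t) (c, t) = s((c, t - 1), (c, t)) := by
  simp only [dualBond, if_pos rfl]; norm_num [min_def]

lemma dualBond_vBA (p c : ℤ) : dualBond (p, c + 1) (p, c) = s((p - 1, c), (p, c)) := by
  have : c + 1 ≠ c := by omega
  simp only [dualBond]; rw [if_neg this]; norm_num [min_def]

lemma dualBond_hAB (c t : ℤ) : dualBond (c, t) (c + 1, t) = s((c, t - 1), (c, t)) :=
  dualBond_right c t

lemma dualBond_vAB (p c : ℤ) : dualBond (p, c) (p, c + 1) = s((p - 1, c), (p, c)) :=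
  dualBond_up p c

lemma mem_Vex {l : ℕ} {γ : Finset DBond} {y : Site} :
    y ∈ Vex l γ ↔ ∃ x ∈ lamBox l, y ∈ nbrs x ∧ y ∉ lamBox l ∧ dualBond x y ∈ γ := by
  simp only [Vex, Finset.mem_biUnion, Finset.mem_filter]

/-- The main geometric lemma: each site of `V_ex(γ̄)` yields a `γu`-bond of the matching
shape, and (if its box-neighbour is not in `Θ`) also a bond of `γ \ (∂Q(Λ) ∪ γu)`. -/
lemma vex_good {l : ℕ} {Θ Θt : Finset Site} {γu : Finset DBond} {i j : ℤ}
    (hib : interiorBdry l Θt = γu) (hγsub : γu ⊆ contourOf Θ \ boxBdry l)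
    (hΘΘt : Θ ⊆ Θt) (hΘtΛ : Θt ⊆ lamBox l)
    (hi : i = 1 ∨ i = -1) (hj : j = 2 ∨ j = -2)
    (hmi : ∀ x, sideSites l i x → x ∉ Θt) (hmj : ∀ x, sideSites l j x → x ∉ Θt)
    {wH wV : ℤ} (hwH : wH = if i = 1 then lamLo l - 1 else lamHi l + 1)
    (hwV : wV = if j = 2 then lamLo l - 1 else lamHi l + 1)
    {y : Site} (hy : y ∈ Vex l (gammaBar l Θt)) :
    (∃ e ∈ γu, GoodB wH wV y e) ∧
      ((∀ x ∈ lamBox l, y ∈ nbrs x → x ∉ Θ) →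
        ∃ e ∈ (contourOf Θ \ boxBdry l) \ γu, GoodB wH wV y e) := by
  obtain ⟨x, hxΛ, hynb, hyΛ, hdb⟩ := mem_Vex.1 hy
  have hdb' := Finset.mem_inter.1 hdb
  have hxΘt : x ∈ Θt := by
    rcases cross_of_mem_contourOf hynb hdb'.2 with ⟨h1, _⟩ | ⟨h1, _⟩
    · exact h1
    · exact absurd (hΘtΛ h1) hyΛ
  obtain ⟨x1, x2⟩ := x
  have hbx := mem_lamBox.1 hxΛ
  simp only at hbx
  have hby : ¬ (lamLo l ≤ y.1 ∧ y.1 ≤ lamHi l ∧ lamLo l ≤ y.2 ∧ y.2 ≤ lamHi l) :=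
    fun hh => hyΛ (mem_lamBox.2 hh)
  have hxΘ' : (∀ x ∈ lamBox l, y ∈ nbrs x → x ∉ Θ) → (x1, x2) ∉ Θ :=
    fun h => h _ hxΛ hynb
  rcases mem_nbrs_iff.1 hynb with rfl | rfl | rfl | rfl
  -- Case 1 : y = (x1+1, x2), x on the right side
  · simp only at hby ⊢
    have hx1 : x1 = lamHi l := by omega
    have hside : sideSites l 1 (x1, x2) := ⟨hxΛ, Or.inl ⟨rfl, hx1⟩⟩
    have hi' : i = -1 := by
      rcases hi with h | h
      · exact absurd hxΘt (hmi _ (h ▸ hside))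
      · exact h
    subst hi'
    have hleft : ((lamLo l, x2) : Site) ∉ Θt :=
      hmi _ ⟨mem_lamBox.2 (by simp; omega), Or.inr (Or.inl ⟨rfl, rfl⟩)⟩
    have hscan := scan_main hib hγsub hΘΘt (fun c => ((c, x2) : Site))
      (fun c => mem_nbrs_iff.2 (Or.inl rfl))
      (a := lamLo l) (b := x1) (by omega)
      (fun c h1 h2 => mem_lamBox.2 (by simp; omega)) hleft hxΘt
    have hwH' : wH = lamHi l + 1 := by rw [hwH]; norm_num
    constructor
    · obtain ⟨c, hc1, hc2, hcb⟩ := hscan.1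
      rw [dualBond_hBA] at hcb
      exact ⟨_, hcb, Or.inl ⟨by simp [hwH', hx1], ⟨c, rfl⟩⟩⟩
    · intro hnΘ
      obtain ⟨c, hc1, hc2, hcb⟩ := hscan.2 (hxΘ' hnΘ)
      rw [dualBond_hAB] at hcb
      exact ⟨_, hcb, Or.inl ⟨by simp [hwH', hx1], ⟨c, rfl⟩⟩⟩
  -- Case 2 : y = (x1-1, x2), x on the left side
  · simp only at hby ⊢
    have hx1 : x1 = lamLo l := by omega
    have hside : sideSites l (-1) (x1, x2) := ⟨hxΛ, Or.inr (Or.inl ⟨rfl, hx1⟩)⟩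
    have hi' : i = 1 := by
      rcases hi with h | h
      · exact h
      · exact absurd hxΘt (hmi _ (h ▸ hside))
    subst hi'
    have hright : ((lamHi l, x2) : Site) ∉ Θt :=
      hmi _ ⟨mem_lamBox.2 (by simp; omega), Or.inl ⟨rfl, rfl⟩⟩
    have hscan := scan_main hib hγsub hΘΘt (fun c => ((-c, x2) : Site))
      (fun c => mem_nbrs_iff.2 (Or.inr (Or.inl (by simp; ring))))
      (a := -(lamHi l)) (b := -x1) (by omega)
      (fun c h1 h2 => mem_lamBox.2 (by simp; omega)) (by simpa using hright)
      (by simpa using hxΘt)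
    have hwH' : wH = lamLo l - 1 := by rw [hwH]; norm_num
    constructor
    · obtain ⟨c, hc1, hc2, hcb⟩ := hscan.1
      have he : dualBond ((-(c+1) : ℤ), x2) ((-c : ℤ), x2)
          = s(((-c - 1 : ℤ), x2 - 1), ((-c - 1 : ℤ), x2)) := by
        have h1 : ((-c : ℤ), x2) = ((-c - 1 : ℤ) + 1, x2) := Prod.ext (by ring) rfl
        have h2 : ((-(c+1) : ℤ), x2) = ((-c - 1 : ℤ), x2) := Prod.ext (by ring) rfl
        rw [h1, h2, dualBond_hAB]
      rw [he] at hcb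
      exact ⟨_, hcb, Or.inl ⟨by simp [hwH', hx1], ⟨-c - 1, rfl⟩⟩⟩
    · intro hnΘ
      obtain ⟨c, hc1, hc2, hcb⟩ := hscan.2 (by simpa using (hxΘ' hnΘ))
      have he : dualBond ((-c : ℤ), x2) ((-(c+1) : ℤ), x2)
          = s(((-c - 1 : ℤ), x2 - 1), ((-c - 1 : ℤ), x2)) := by
        have h1 : ((-c : ℤ), x2) = ((-c - 1 : ℤ) + 1, x2) := Prod.ext (by ring) rfl
        have h2 : ((-(c+1) : ℤ), x2) = ((-c - 1 : ℤ), x2) := Prod.ext (by ring) rfl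
        rw [h1, h2, dualBond_hBA]
      rw [he] at hcb
      exact ⟨_, hcb, Or.inl ⟨by simp [hwH', hx1], ⟨-c - 1, rfl⟩⟩⟩
  -- Case 3 : y = (x1, x2+1), x on the top side
  · simp only at hby ⊢
    have hx2 : x2 = lamHi l := by omega
    have hside : sideSites l 2 (x1, x2) := ⟨hxΛ, Or.inr (Or.inr (Or.inl ⟨rfl, hx2⟩))⟩
    have hj' : j = -2 := by
      rcases hj with h | h
      · exact absurd hxΘt (hmj _ (h ▸ hside))
      · exact h
    subst hj'
    have hbot : ((x1, lamLo l) : Site) ∉ Θt :=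
      hmj _ ⟨mem_lamBox.2 (by simp; omega), Or.inr (Or.inr (Or.inr ⟨rfl, rfl⟩))⟩
    have hscan := scan_main hib hγsub hΘΘt (fun c => ((x1, c) : Site))
      (fun c => mem_nbrs_iff.2 (Or.inr (Or.inr (Or.inl rfl))))
      (a := lamLo l) (b := x2) (by omega)
      (fun c h1 h2 => mem_lamBox.2 (by simp; omega)) hbot hxΘt
    have hwV' : wV = lamHi l + 1 := by rw [hwV]; norm_num
    constructor
    · obtain ⟨c, hc1, hc2, hcb⟩ := hscan.1
      rw [dualBond_vBA] at hcb
      exact ⟨_, hcb, Or.inr ⟨by simp [hwV', hx2], ⟨c, rfl⟩⟩⟩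
    · intro hnΘ
      obtain ⟨c, hc1, hc2, hcb⟩ := hscan.2 (hxΘ' hnΘ)
      rw [dualBond_vAB] at hcb
      exact ⟨_, hcb, Or.inr ⟨by simp [hwV', hx2], ⟨c, rfl⟩⟩⟩
  -- Case 4 : y = (x1, x2-1), x on the bottom side
  · simp only at hby ⊢
    have hx2 : x2 = lamLo l := by omega
    have hside : sideSites l (-2) (x1, x2) := ⟨hxΛ, Or.inr (Or.inr (Or.inr ⟨rfl, hx2⟩))⟩
    have hj' : j = 2 := by
      rcases hj with h | h
      · exact h
      · exact absurd hxΘt (hmj _ (h ▸ hside))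
    subst hj'
    have htop : ((x1, lamHi l) : Site) ∉ Θt :=
      hmj _ ⟨mem_lamBox.2 (by simp; omega), Or.inr (Or.inr (Or.inl ⟨rfl, rfl⟩))⟩
    have hscan := scan_main hib hγsub hΘΘt (fun c => ((x1, -c) : Site))
      (fun c => mem_nbrs_iff.2 (Or.inr (Or.inr (Or.inr (by simp; ring)))))
      (a := -(lamHi l)) (b := -x2) (by omega)
      (fun c h1 h2 => mem_lamBox.2 (by simp; omega)) (by simpa using htop)
      (by simpa using hxΘt)
    have hwV' : wV = lamLo l - 1 := by rw [hwV]; norm_num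
    constructor
    · obtain ⟨c, hc1, hc2, hcb⟩ := hscan.1
      have he : dualBond (x1, (-(c+1) : ℤ)) (x1, (-c : ℤ))
          = s((x1 - 1, (-c - 1 : ℤ)), (x1, (-c - 1 : ℤ))) := by
        have h1 : ((x1, (-c : ℤ)) : Site) = (x1, (-c - 1 : ℤ) + 1) := Prod.ext rfl (by ring)
        have h2 : ((x1, (-(c+1) : ℤ)) : Site) = (x1, (-c - 1 : ℤ)) := Prod.ext rfl (by ring)
        rw [h1, h2, dualBond_vAB]
      rw [he] at hcb
      exact ⟨_, hcb, Or.inr ⟨by simp [hwV', hx2], ⟨-c - 1, rfl⟩⟩⟩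
    · intro hnΘ
      obtain ⟨c, hc1, hc2, hcb⟩ := hscan.2 (by simpa using (hxΘ' hnΘ))
      have he : dualBond (x1, (-c : ℤ)) (x1, (-(c+1) : ℤ))
          = s((x1 - 1, (-c - 1 : ℤ)), (x1, (-c - 1 : ℤ))) := by
        have h1 : ((x1, (-c : ℤ)) : Site) = (x1, (-c - 1 : ℤ) + 1) := Prod.ext rfl (by ring)
        have h2 : ((x1, (-(c+1) : ℤ)) : Site) = (x1, (-c - 1 : ℤ)) := Prod.ext rfl (by ring)
        rw [h1, h2, dualBond_vBA]
      rw [he] at hcb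
      exact ⟨_, hcb, Or.inr ⟨by simp [hwV', hx2], ⟨-c - 1, rfl⟩⟩⟩

end VexGood
section HamAux

open Classical

noncomputable def intPairs (l : ℕ) : Finset (Site × Site) :=
  ((lamBox l) ×ˢ (lamBox l)).filter (fun p => p.2 ∈ nbrs p.1)

lemma sum_pairs (l : ℕ) (f : Site → Site → ℝ) :
    ∑ x ∈ lamBox l, ∑ y ∈ (nbrs x).filter (· ∈ lamBox l), f x y
      = ∑ p ∈ intPairs l, f p.1 p.2 := by
  classical
  rw [intPairs, Finset.sum_filter, Finset.sum_product]
  refine Finset.sum_congr rfl fun x hx => ?_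
  have hfe : (nbrs x).filter (· ∈ lamBox l) = (lamBox l).filter (· ∈ nbrs x) := by
    ext y; simp [and_comm]
  rw [hfe, Finset.sum_filter]

lemma swap_mem_intPairs {l : ℕ} {p : Site × Site} (hp : p ∈ intPairs l) :
    p.swap ∈ intPairs l := by
  simp only [intPairs, Finset.mem_filter, Finset.mem_product] at hp ⊢
  exact ⟨⟨hp.1.2, hp.1.1⟩, nbrs_symm hp.2⟩

lemma sum_pairs_swap (l : ℕ) (f : Site × Site → ℝ) :
    ∑ p ∈ intPairs l, f p = ∑ p ∈ intPairs l, f p.swap := by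
  refine Finset.sum_nbij' (fun p => p.swap) (fun p => p.swap) ?_ ?_ ?_ ?_ ?_ <;>
    intro p hp <;> simp [swap_mem_intPairs hp]

lemma card_crossPairs {l : ℕ} {Θ : Finset Site} (hΘΛ : Θ ⊆ lamBox l) :
    (((intPairs l)).filter (fun p => p.1 ∈ Θ ∧ p.2 ∉ Θ)).card
      = (contourOf Θ \ boxBdry l).card := by
  classical
  refine Finset.card_nbij (fun p => dualBond p.1 p.2) ?_ ?_ ?_
  · intro p hp
    simp only [Finset.mem_coe, Finset.mem_filter, intPairs, Finset.mem_product] at hp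
    obtain ⟨⟨⟨h1, h2⟩, h3⟩, h4, h5⟩ := hp
    rw [Finset.mem_coe, Finset.mem_sdiff]
    exact ⟨mem_contourOf.2 ⟨p.1, h4, p.2, h3, h5, rfl⟩, not_mem_boxBdry h3 h1 h2⟩
  · intro p hp q hq hpq
    simp only [Finset.mem_coe, Finset.mem_filter, intPairs, Finset.mem_product] at hp hq
    obtain ⟨⟨-, h3⟩, h4, h5⟩ := hp
    obtain ⟨⟨-, h3'⟩, h4', h5'⟩ := hq
    rcases dualBond_inj h3 h3' hpq with ⟨ha, hb⟩ | ⟨ha, hb⟩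
    · exact Prod.ext ha hb
    · exact absurd (ha ▸ h4) h5'
  · intro e he
    rw [Finset.mem_coe, Finset.mem_sdiff] at he
    obtain ⟨x, hx, y, hy, hyΘ, rfl⟩ := mem_contourOf.1 he.1
    have hyΛ : y ∈ lamBox l := by
      by_contra hyl
      exact he.2 (mem_boxBdry_of (hΘΛ hx) hy hyl)
    refine ⟨(x, y), ?_, rfl⟩
    simp only [Finset.mem_coe, Finset.mem_filter, intPairs, Finset.mem_product]
    exact ⟨⟨⟨hΘΛ hx, hyΛ⟩, hy⟩, hx, hyΘ⟩

lemma card_crossPairs' {l : ℕ} {Θ : Finset Site} :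
    (((intPairs l)).filter (fun p => p.1 ∉ Θ ∧ p.2 ∈ Θ)).card
      = (((intPairs l)).filter (fun p => p.1 ∈ Θ ∧ p.2 ∉ Θ)).card := by
  classical
  refine Finset.card_nbij (fun p => p.swap) ?_ ?_ ?_
  · intro p hp
    rw [Finset.mem_coe, Finset.mem_filter] at hp ⊢
    exact ⟨swap_mem_intPairs hp.1, hp.2.2, hp.2.1⟩
  · intro p _ q _ h
    simpa [Prod.ext_iff] using congrArg Prod.swap h
  · intro p hp
    rw [Finset.mem_coe, Finset.mem_filter] at hp
    refine ⟨p.swap, ?_, by simp⟩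
    rw [Finset.mem_coe, Finset.mem_filter]
    exact ⟨swap_mem_intPairs hp.1, hp.2.2, hp.2.1⟩

lemma sum_ext_pairs {l : ℕ} {Θ : Finset Site} (hΘΛ : Θ ⊆ lamBox l) (ω : Site → ℝ) :
    ∑ x ∈ Θ, ∑ y ∈ (nbrs x).filter (· ∉ lamBox l), ω y
      = ∑ y ∈ Θ.biUnion (fun x => (nbrs x).filter (· ∉ lamBox l)), ω y := by
  classical
  rw [Finset.sum_biUnion]
  intro a ha b hb hab
  rw [Function.onFun, Finset.disjoint_left]
  intro y hy1 hy2
  simp only [Finset.mem_filter] at hy1 hy2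
  exact hab (ext_nbr_unique hy1.2 (hΘΛ ha) (hΘΛ hb) hy1.1 hy2.1)

end HamAux
section DHEq

lemma dH_eq {l : ℕ} {σ : Site → ℤ} {ε : ℤ} (hσ : ∀ x ∈ lamBox l, σ x = 1 ∨ σ x = -1)
    (hε : ε = 1 ∨ ε = -1) (ω : Site → ℝ) {C Θ : Finset Site}
    (hcl : IsCluster l σ ε C) (hfill : (↑Θ : Set Site) = fill C) (hΘΛ : Θ ⊆ lamBox l) :
    dH l ω [Θ] σ = 2 * ((contourOf Θ \ boxBdry l).card : ℝ)
      - 2 * (ε : ℝ) * ∑ y ∈ Θ.biUnion (fun x => (nbrs x).filter (· ∉ lamBox l)), ω y := by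
  classical
  have hcrossval : ∀ x y : Site, x ∈ Θ → y ∉ Θ → y ∈ nbrs x → y ∈ lamBox l →
      ((σ x * σ y : ℤ) : ℝ) = -1 := by
    intro x y h1 h2 h3 h4
    obtain ⟨hx, hy⟩ := spin_bdry hcl hfill h1 h3 h2
    have hyv := hσ y h4
    have hne := hy h4
    have hxv : σ x * σ y = -1 := by
      rcases hε with rfl | rfl <;> rcases hyv with h | h <;> simp_all
    rw [hxv]; norm_num
  have hspin : ∀ x ∈ Θ, ∀ y ∈ nbrs x, y ∉ lamBox l → σ x = ε := by
    intro x hx y hy hyl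
    have hyΘ : y ∉ Θ := fun h => hyl (hΘΛ h)
    exact (spin_bdry hcl hfill hx hy hyΘ).1
  have hA : (∑ x ∈ lamBox l, ∑ y ∈ (nbrs x).filter (· ∈ lamBox l), ((σ x * σ y : ℤ) : ℝ))
      - (∑ x ∈ lamBox l, ∑ y ∈ (nbrs x).filter (· ∈ lamBox l),
          ((flipC Θ σ x * flipC Θ σ y : ℤ) : ℝ))
      = -4 * ((contourOf Θ \ boxBdry l).card : ℝ) := by
    rw [sum_pairs, sum_pairs, ← Finset.sum_sub_distrib]
    have hpt : ∀ p ∈ intPairs l,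
        ((σ p.1 * σ p.2 : ℤ) : ℝ) - ((flipC Θ σ p.1 * flipC Θ σ p.2 : ℤ) : ℝ)
          = if (p.1 ∈ Θ ∧ p.2 ∉ Θ) ∨ (p.1 ∉ Θ ∧ p.2 ∈ Θ) then (-2 : ℝ) else 0 := by
      intro p hp
      simp only [intPairs, Finset.mem_filter, Finset.mem_product] at hp
      obtain ⟨⟨hp1, hp2⟩, hp3⟩ := hp
      by_cases h1 : p.1 ∈ Θ <;> by_cases h2 : p.2 ∈ Θ
      · simp only [flipC, if_pos h1, if_pos h2]
        rw [if_neg (by tauto)]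
        push_cast; ring
      · have hcv := hcrossval p.1 p.2 h1 h2 hp3 hp2
        push_cast at hcv
        rw [if_pos (Or.inl ⟨h1, h2⟩)]
        simp only [flipC, if_pos h1, if_neg h2]
        push_cast; nlinarith [hcv]
      · have hcv := hcrossval p.2 p.1 h2 h1 (nbrs_symm hp3) hp1
        push_cast at hcv
        rw [if_pos (Or.inr ⟨h1, h2⟩)]
        simp only [flipC, if_neg h1, if_pos h2]
        push_cast; nlinarith [hcv]
      · simp only [flipC, if_neg h1, if_neg h2]
        rw [if_neg (by tauto)]
        push_cast; ring
    rw [Finset.sum_congr rfl hpt, ← Finset.sum_filter, Finset.filter_or]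
    have hdis : Disjoint ((intPairs l).filter (fun p => p.1 ∈ Θ ∧ p.2 ∉ Θ))
        ((intPairs l).filter (fun p => p.1 ∉ Θ ∧ p.2 ∈ Θ)) := by
      rw [Finset.disjoint_left]
      intro p hp1 hp2
      rw [Finset.mem_filter] at hp1 hp2
      exact hp2.2.1 hp1.2.1
    rw [Finset.sum_const, Finset.card_union_of_disjoint hdis,
      card_crossPairs hΘΛ, card_crossPairs', card_crossPairs hΘΛ]
    simp only [nsmul_eq_mul]
    push_cast
    ring
  have hB : (∑ x ∈ lamBox l, ∑ y ∈ (nbrs x).filter (· ∉ lamBox l), (σ x : ℝ) * ω y)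
      - (∑ x ∈ lamBox l, ∑ y ∈ (nbrs x).filter (· ∉ lamBox l), ((flipC Θ σ x : ℤ) : ℝ) * ω y)
      = 2 * (ε : ℝ) * ∑ y ∈ Θ.biUnion (fun x => (nbrs x).filter (· ∉ lamBox l)), ω y := by
    rw [← Finset.sum_sub_distrib]
    have h1 : ∀ x ∈ lamBox l,
        ((∑ y ∈ (nbrs x).filter (· ∉ lamBox l), (σ x : ℝ) * ω y)
          - ∑ y ∈ (nbrs x).filter (· ∉ lamBox l), ((flipC Θ σ x : ℤ) : ℝ) * ω y)
        = ∑ y ∈ (nbrs x).filter (· ∉ lamBox l),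
            (((σ x : ℝ) - ((flipC Θ σ x : ℤ) : ℝ)) * ω y) := by
      intro x hx
      rw [← Finset.sum_sub_distrib]
      exact Finset.sum_congr rfl fun y hy => by ring
    rw [Finset.sum_congr rfl h1, ← Finset.sum_sdiff hΘΛ]
    have hz : ∀ x ∈ lamBox l \ Θ,
        (∑ y ∈ (nbrs x).filter (· ∉ lamBox l),
          (((σ x : ℝ) - ((flipC Θ σ x : ℤ) : ℝ)) * ω y)) = 0 := by
      intro x hx
      rw [Finset.mem_sdiff] at hx
      refine Finset.sum_eq_zero fun y hy => ?_
      simp only [flipC, if_neg hx.2]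
      ring
    have hθ : ∀ x ∈ Θ,
        (∑ y ∈ (nbrs x).filter (· ∉ lamBox l),
          (((σ x : ℝ) - ((flipC Θ σ x : ℤ) : ℝ)) * ω y))
        = ∑ y ∈ (nbrs x).filter (· ∉ lamBox l), 2 * (ε : ℝ) * ω y := by
      intro x hx
      refine Finset.sum_congr rfl fun y hy => ?_
      rw [Finset.mem_filter] at hy
      have hxε := hspin x hx y hy.1 hy.2
      simp only [flipC, if_pos hx, hxε]
      push_cast; ring
    rw [Finset.sum_eq_zero hz, zero_add, Finset.sum_congr rfl hθ]
    have : ∀ x ∈ Θ, (∑ y ∈ (nbrs x).filter (· ∉ lamBox l), 2 * (ε : ℝ) * ω y)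
        = 2 * (ε : ℝ) * ∑ y ∈ (nbrs x).filter (· ∉ lamBox l), ω y := by
      intro x hx; rw [Finset.mul_sum]
    rw [Finset.sum_congr rfl this, ← Finset.mul_sum, sum_ext_pairs hΘΛ]
  have hfold : ([Θ].foldr flipC σ) = flipC Θ σ := rfl
  rw [dH, hfold, Ham, Ham]
  linarith [hA, hB]

end DHEq
/-- For a non-crossing (ε)-contour `γ` at `σ` in `Λ(l)`:
`(1/2)Δ_γ H^ω(σ) ≥ |γ̲| - ε ∑_{y∈V_ex(γ̄)} ω_y ≥ |γ̲| - |I(γ)| ≥ 0`, where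
`γ̄ = ∂Q(Λ(l)) ∩ ∂Q(Θ̃)` and `I(γ) = V_ex(γ̄)`. -/
theorem stmt5 (l : ℕ) (σ : Site → ℤ) (hσ : ∀ x ∈ lamBox l, σ x = 1 ∨ σ x = -1)
    (ε : ℤ) (hε : ε = 1 ∨ ε = -1) (ω : Site → ℝ)
    (hω : ∀ y ∈ extBdry l, |ω y| ≤ 1)
    (Θ : Finset Site) (hc : IsEContour l σ ε Θ)
    (hnc : NonCrossing l (contourOf Θ)) (γu : Finset DBond) (Θt : Finset Site)
    (hu : UnderlineData l Θ γu Θt) :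
    (1/2 : ℝ) * dH l ω [Θ] σ ≥
        (γu.card : ℝ) - (ε : ℝ) * ∑ y ∈ Vex l (gammaBar l Θt), ω y ∧
      (γu.card : ℝ) - (ε : ℝ) * ∑ y ∈ Vex l (gammaBar l Θt), ω y ≥
        (γu.card : ℝ) - ((Vex l (gammaBar l Θt)).card : ℝ) ∧
      (γu.card : ℝ) - ((Vex l (gammaBar l Θt)).card : ℝ) ≥ 0 := by
  classical
  obtain ⟨C, hcl, hfill⟩ := hc
  obtain ⟨hγsub, hconn, hcomp, hΘΘt, hΘtΛ, hct1, hct2, hib, i, j, hi, hj, hti, htj,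
    hmi, hmj⟩ := hu
  have hΘΛ : Θ ⊆ lamBox l := hΘΘt.trans hΘtΛ
  set wH : ℤ := if i = 1 then lamLo l - 1 else lamHi l + 1 with hwH
  set wV : ℤ := if j = 2 then lamLo l - 1 else lamHi l + 1 with hwV
  set W := Θ.biUnion (fun x => (nbrs x).filter (· ∉ lamBox l)) with hW
  set V := Vex l (gammaBar l Θt) with hV
  have hWV : W ⊆ V := by
    intro y hy
    rw [hW, Finset.mem_biUnion] at hy
    obtain ⟨x, hx, hy2⟩ := hy
    rw [Finset.mem_filter] at hy2
    refine mem_Vex.2 ⟨x, hΘΛ hx, hy2.1, hy2.2, ?_⟩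
    rw [gammaBar, Finset.mem_inter]
    exact ⟨mem_boxBdry_of (hΘΛ hx) hy2.1 hy2.2,
      mem_contourOf.2 ⟨x, hΘΘt hx, y, hy2.1, fun h => hy2.2 (hΘtΛ h), rfl⟩⟩
  have hωabs : ∀ y ∈ V, |ω y| ≤ 1 := by
    intro y hy
    obtain ⟨x, hx, h1, h2, _⟩ := mem_Vex.1 hy
    exact hω y ⟨h2, x, hx, d1_of_nbrs h1⟩
  have h3 : V.card ≤ γu.card :=
    card_le_of_goodB (wH := wH) (wV := wV) (fun y hy =>
      (vex_good hib hγsub hΘΘt hΘtΛ hi hj hmi hmj hwH hwV hy).1)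
  have hVWcard : (V \ W).card ≤ ((contourOf Θ \ boxBdry l) \ γu).card := by
    refine card_le_of_goodB (wH := wH) (wV := wV) (fun y hy => ?_)
    rw [Finset.mem_sdiff] at hy
    refine (vex_good hib hγsub hΘΘt hΘtΛ hi hj hmi hmj hwH hwV hy.1).2 ?_
    intro x hxΛ hynb hxΘ
    apply hy.2
    obtain ⟨x', hx', h1, h2, _⟩ := mem_Vex.1 hy.1
    rw [hW, Finset.mem_biUnion]
    exact ⟨x, hxΘ, Finset.mem_filter.2 ⟨hynb, h2⟩⟩
  have hdH := dH_eq hσ hε ω hcl hfill hΘΛ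
  have hcard1 : ((contourOf Θ \ boxBdry l) \ γu).card + γu.card
      = (contourOf Θ \ boxBdry l).card := Finset.card_sdiff_add_card_eq_card hγsub
  have hsdiff : ∑ y ∈ V \ W, ω y = ∑ y ∈ V, ω y - ∑ y ∈ W, ω y :=
    Finset.sum_sdiff_eq_sub hWV
  have habs1 : |∑ y ∈ V \ W, ω y| ≤ ((V \ W).card : ℝ) := by
    refine le_trans (Finset.abs_sum_le_sum_abs _ _) ?_
    have := Finset.sum_le_card_nsmul (V \ W) (fun y => |ω y|) 1
      (fun y hy => hωabs y (Finset.mem_sdiff.1 hy).1)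
    simpa using this
  have habsV : |∑ y ∈ V, ω y| ≤ (V.card : ℝ) := by
    refine le_trans (Finset.abs_sum_le_sum_abs _ _) ?_
    have := Finset.sum_le_card_nsmul V (fun y => |ω y|) 1 hωabs
    simpa using this
  have hεabs : |(ε : ℝ)| = 1 := by rcases hε with rfl | rfl <;> norm_num
  have hmul : ∀ t : ℝ, (ε : ℝ) * t ≤ |t| ∧ -((ε : ℝ) * t) ≤ |t| := by
    intro t
    have h1 : |(ε : ℝ) * t| = |t| := by rw [abs_mul, hεabs, one_mul]
    constructor
    · exact h1 ▸ le_abs_self _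
    · exact h1 ▸ neg_le_abs _
  refine ⟨?_, ?_, ?_⟩
  · rw [hdH]
    have c1 : ((V \ W).card : ℝ) ≤ (((contourOf Θ \ boxBdry l) \ γu).card : ℝ) := by
      exact_mod_cast hVWcard
    have c2 : (((contourOf Θ \ boxBdry l) \ γu).card : ℝ) + (γu.card : ℝ)
        = ((contourOf Θ \ boxBdry l).card : ℝ) := by exact_mod_cast hcard1
    have hs2 : -((ε : ℝ) * ∑ y ∈ V, ω y - (ε : ℝ) * ∑ y ∈ W, ω y) ≤ ((V \ W).card : ℝ) := by
      have hm := (hmul (∑ y ∈ V \ W, ω y)).2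
      rw [hsdiff] at hm habs1
      calc -((ε : ℝ) * ∑ y ∈ V, ω y - (ε : ℝ) * ∑ y ∈ W, ω y)
          = -((ε : ℝ) * ((∑ y ∈ V, ω y) - ∑ y ∈ W, ω y)) := by ring
        _ ≤ |(∑ y ∈ V, ω y) - ∑ y ∈ W, ω y| := hm
        _ ≤ ((V \ W).card : ℝ) := habs1
    linarith [hs2, c1, c2]
  · have hm := (hmul (∑ y ∈ V, ω y)).1
    linarith [hm, habsV]
  · have : (V.card : ℝ) ≤ (γu.card : ℝ) := by exact_mod_cast h3
    linarith
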